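/- Neither the set P = {n ∈ ℕ : λ(n) = +1} nor the set N = {n ∈ ℕ : λ(n) = -1} contains an infinite arithmetic progression, where λ is the Liouville function. -/
import Mathlib


/-- The Liouville function `λ(n) = (-1)^Ω(n)`. -/
def liouville (n : ℕ) : ℤ := (-1) ^ (ArithmeticFunction.cardFactors n)

lemma liouville_mul {m n : ℕ} (hm : m ≠ 0) (hn : n ≠ 0) :
    liouville (m * n) = liouville m * liouville n := by
  unfold liouville
  rw [ArithmeticFunction.cardFactors_mul hm hn, pow_add]

lemma liouville_prime {p : ℕ} (hp : p.Prime) : liouville p = -1 := by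
  unfold liouville
  rw [ArithmeticFunction.cardFactors_apply_prime hp, pow_one]

lemma no_const_liouville (n₀ l : ℕ) (hn₀ : 0 < n₀) (hl : 0 < l) (c : ℤ)
    (h : ∀ k : ℕ, liouville (n₀ + l * k) = c) : c = 0 := by
  obtain ⟨p, hp, hgt, hmod⟩ := Nat.exists_prime_gt_modEq_one (k := l) 1 hl.ne'
  have hdvd : l ∣ p - 1 := (Nat.modEq_iff_dvd' (by omega)).mp hmod.symm
  obtain ⟨t, ht⟩ := hdvd
  have hpt : p = 1 + l * t := by have := hp.two_le; omega
  have h0 : liouville n₀ = c := by simpa using h 0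
  have h1 : liouville (n₀ * p) = c := by
    have := h (n₀ * t)
    rw [show n₀ + l * (n₀ * t) = n₀ * p by rw [hpt]; ring] at this
    exact this
  rw [liouville_mul hn₀.ne' hp.pos.ne', h0, liouville_prime hp] at h1
  linarith

theorem no_infinite_AP_of_constant_liouville_sign (n₀ l : ℕ) (hn₀ : 0 < n₀) (hl : 0 < l) :
    (¬ ∀ k : ℕ, liouville (n₀ + l * k) = 1) ∧ (¬ ∀ k : ℕ, liouville (n₀ + l * k) = -1) := by
  constructor
  · intro h
    have := no_const_liouville n₀ l hn₀ hl 1 h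
    norm_num at this
  · intro h
    have := no_const_liouville n₀ l hn₀ hl (-1) h
    norm_num at this
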